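/- Let n > 0 and let F ∈ M₆(ℝ) be the Clohessy–Wiltshire system matrix and Φ(t) ∈ M₆(ℝ) the Clohessy–Wiltshire state-transition matrix. Then for every t ∈ ℝ, Φ(t) = exp(tF), the matrix exponential of tF. -/

import Mathlib

open Real Matrix

/-- Position-position block of the Clohessy–Wiltshire state-transition matrix. -/
noncomputable def phiRR (n t : ℝ) : Matrix (Fin 3) (Fin 3) ℝ :=
  !![4 - 3 * Real.cos (n * t), 0, 0;
     6 * (Real.sin (n * t) - n * t), 1, 0;
     0, 0, Real.cos (n * t)]

/-- Position-velocity block of the Clohessy–Wiltshire state-transition matrix. -/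
noncomputable def phiRV (n t : ℝ) : Matrix (Fin 3) (Fin 3) ℝ :=
  (1 / n) • !![Real.sin (n * t), 2 * (1 - Real.cos (n * t)), 0;
               -2 * (1 - Real.cos (n * t)), 4 * Real.sin (n * t) - 3 * (n * t), 0;
               0, 0, Real.sin (n * t)]

/-- Velocity-position block of the Clohessy–Wiltshire state-transition matrix. -/
noncomputable def phiVR (n t : ℝ) : Matrix (Fin 3) (Fin 3) ℝ :=
  n • !![3 * Real.sin (n * t), 0, 0;
         -6 * (1 - Real.cos (n * t)), 0, 0;
         0, 0, -Real.sin (n * t)]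

/-- Velocity-velocity block of the Clohessy–Wiltshire state-transition matrix. -/
noncomputable def phiVV (n t : ℝ) : Matrix (Fin 3) (Fin 3) ℝ :=
  !![Real.cos (n * t), 2 * Real.sin (n * t), 0;
     -2 * Real.sin (n * t), 4 * Real.cos (n * t) - 3, 0;
     0, 0, Real.cos (n * t)]

/-- The full 6×6 Clohessy–Wiltshire state-transition matrix. -/
noncomputable def cwPhi (n t : ℝ) : Matrix (Fin 3 ⊕ Fin 3) (Fin 3 ⊕ Fin 3) ℝ :=
  Matrix.fromBlocks (phiRR n t) (phiRV n t) (phiVR n t) (phiVV n t)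

/-- The Clohessy–Wiltshire system matrix `F = [[0, I],[A, B]]`. -/
noncomputable def cwF (n : ℝ) : Matrix (Fin 3 ⊕ Fin 3) (Fin 3 ⊕ Fin 3) ℝ :=
  Matrix.fromBlocks 0 1
    !![3 * n ^ 2, 0, 0; 0, 0, 0; 0, 0, -n ^ 2]
    !![0, 2 * n, 0; -2 * n, 0, 0; 0, 0, 0]

noncomputable def cwMc (n : ℝ) : Matrix (Fin 3 ⊕ Fin 3) (Fin 3 ⊕ Fin 3) ℝ :=
  Matrix.fromBlocks !![-3,0,0;0,0,0;0,0,1] !![0,-2/n,0;2/n,0,0;0,0,0]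
    !![0,0,0;6*n,0,0;0,0,0] !![1,0,0;0,4,0;0,0,1]
noncomputable def cwMs (n : ℝ) : Matrix (Fin 3 ⊕ Fin 3) (Fin 3 ⊕ Fin 3) ℝ :=
  Matrix.fromBlocks !![0,0,0;6,0,0;0,0,0] !![1/n,0,0;0,4/n,0;0,0,1/n]
    !![3*n,0,0;0,0,0;0,0,-n] !![0,2,0;-2,0,0;0,0,0]
noncomputable def cwMt (n : ℝ) : Matrix (Fin 3 ⊕ Fin 3) (Fin 3 ⊕ Fin 3) ℝ :=
  Matrix.fromBlocks !![0,0,0;-6*n,0,0;0,0,0] !![0,0,0;0,-3,0;0,0,0] 0 0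
noncomputable def cwM0 (n : ℝ) : Matrix (Fin 3 ⊕ Fin 3) (Fin 3 ⊕ Fin 3) ℝ :=
  Matrix.fromBlocks !![4,0,0;0,1,0;0,0,0] !![0,2/n,0;-2/n,0,0;0,0,0]
    !![0,0,0;-6*n,0,0;0,0,0] !![0,0,0;0,-3,0;0,0,0]

lemma cwPhi_decomp (n : ℝ) (hn : n ≠ 0) (t : ℝ) :
    cwPhi n t = Real.cos (n*t) • cwMc n + Real.sin (n*t) • cwMs n + t • cwMt n + cwM0 n := by
  ext (i|i) (j|j) <;>
    fin_cases i <;> fin_cases j <;>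
      simp [cwPhi, cwMc, cwMs, cwMt, cwM0, phiRR, phiRV, phiVR, phiVV,
        Matrix.vecHead, Matrix.vecTail] <;> (try field_simp) <;> ring

set_option maxHeartbeats 2000000 in
lemma cwDeriv_eq (n : ℝ) (hn : n ≠ 0) (t : ℝ) :
    (-(n * Real.sin (n*t))) • cwMc n + (n * Real.cos (n*t)) • cwMs n + cwMt n
      = cwF n * cwPhi n t := by
  rw [cwPhi, cwF, cwMc, cwMs, cwMt, Matrix.fromBlocks_multiply,
    Matrix.fromBlocks_smul, Matrix.fromBlocks_smul, Matrix.fromBlocks_add,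
    Matrix.fromBlocks_add, Matrix.fromBlocks_inj]
  refine ⟨?_, ?_, ?_, ?_⟩ <;>
    · ext i j
      fin_cases i <;> fin_cases j <;>
        simp [phiRR, phiRV, phiVR, phiVV, Matrix.mul_apply,
          Fin.sum_univ_succ, Matrix.vecHead, Matrix.vecTail] <;> (try field_simp) <;> ring

lemma cwPhi_zero (n : ℝ) : cwPhi n 0 = 1 := by
  ext (i|i) (j|j) <;>
    fin_cases i <;> fin_cases j <;>
      simp [cwPhi, phiRR, phiRV, phiVR, phiVV, Matrix.one_apply,
        Matrix.vecHead, Matrix.vecTail] <;> norm_num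

theorem cwPhi_eq_exp (n : ℝ) (hn : 0 < n) :
    ∀ t : ℝ, cwPhi n t = NormedSpace.exp (t • cwF n) := by
  have hn' : n ≠ 0 := ne_of_gt hn
  letI : SeminormedRing (Matrix (Fin 3 ⊕ Fin 3) (Fin 3 ⊕ Fin 3) ℝ) :=
    Matrix.linftyOpSemiNormedRing
  letI : NormedRing (Matrix (Fin 3 ⊕ Fin 3) (Fin 3 ⊕ Fin 3) ℝ) := Matrix.linftyOpNormedRing
  letI : NormedAlgebra ℝ (Matrix (Fin 3 ⊕ Fin 3) (Fin 3 ⊕ Fin 3) ℝ) :=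
    Matrix.linftyOpNormedAlgebra
  have hPhi : ∀ t : ℝ, HasDerivAt (fun t => cwPhi n t) (cwF n * cwPhi n t) t := by
    intro t
    have hc : HasDerivAt (fun t : ℝ => Real.cos (n * t)) (-(n * Real.sin (n * t))) t := by
      have := (Real.hasDerivAt_cos (n * t)).comp t ((hasDerivAt_id t).const_mul n)
      exact this.congr_deriv (by ring)
    have hs : HasDerivAt (fun t : ℝ => Real.sin (n * t)) (n * Real.cos (n * t)) t := by
      have := (Real.hasDerivAt_sin (n * t)).comp t ((hasDerivAt_id t).const_mul n)
      exact this.congr_deriv (by ring)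
    have H := (((hc.smul_const (cwMc n)).add (hs.smul_const (cwMs n))).add
      ((hasDerivAt_id t).smul_const (cwMt n))).add_const (cwM0 n)
    rw [← cwDeriv_eq n hn' t,
      show (fun t => cwPhi n t) = fun t =>
        Real.cos (n*t) • cwMc n + Real.sin (n*t) • cwMs n + t • cwMt n + cwM0 n from
        funext (cwPhi_decomp n hn')]
    simp only [one_smul] at H
    exact H
  set G : ℝ → Matrix (Fin 3 ⊕ Fin 3) (Fin 3 ⊕ Fin 3) ℝ :=
    fun t => NormedSpace.exp (t • (-cwF n)) * cwPhi n t with hGdef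
  have hG : ∀ t : ℝ, HasDerivAt G 0 t := by
    intro t
    have h1 := hasDerivAt_exp_smul_const (𝕂 := ℝ) (-cwF n) t
    have h2 := hPhi t
    have h3 := h1.mul h2
    refine h3.congr_deriv ?_
    simp [Matrix.mul_assoc, Matrix.mul_neg, Matrix.neg_mul]
  have hconst : ∀ t : ℝ, G t = G 0 := fun t =>
    is_const_of_deriv_eq_zero (fun x => (hG x).differentiableAt) (fun x => (hG x).deriv) t 0
  have hG0 : G 0 = 1 := by
    simp [hGdef, cwPhi_zero, NormedSpace.exp_zero]
  intro t
  have hcomm : Commute (t • cwF n) (t • (-cwF n)) :=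
    (((Commute.refl (cwF n)).neg_right).smul_left t).smul_right t
  have hmul : NormedSpace.exp (t • cwF n) * NormedSpace.exp (t • (-cwF n)) = 1 := by
    rw [← Matrix.exp_add_of_commute _ _ hcomm]
    simp [smul_neg]
  calc cwPhi n t
      = (NormedSpace.exp (t • cwF n) * NormedSpace.exp (t • (-cwF n))) * cwPhi n t := by
        rw [hmul, Matrix.one_mul]
    _ = NormedSpace.exp (t • cwF n) * G t := by rw [Matrix.mul_assoc]
    _ = NormedSpace.exp (t • cwF n) := by rw [hconst t, hG0, Matrix.mul_one]
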